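/- The function λ ↦ Q̃(x,λ) is convex on ℝ for every fixed x ∈ [0,1), where Q̃(x,λ) = (((1+x)/2)^λ - ((1-x)/2)^λ)/λ for λ ≠ 0 and Q̃(x,0) = ln((1+x)/(1-x)). -/

import Mathlib

/-- Quantile function of `|X|` for a Tukey Lambda random variable `X`. -/
noncomputable def tukeyQabs (x lam : ℝ) : ℝ :=
  if lam = 0 then Real.log ((1 + x) / (1 - x))
  else (((1 + x) / 2) ^ lam - ((1 - x) / 2) ^ lam) / lam

open Real MeasureTheory intervalIntegral

lemma convex_int (lb la : ℝ) (h : lb ≤ la) :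
    ConvexOn ℝ Set.univ (fun lam : ℝ => ∫ t in lb..la, Real.exp (lam * t)) := by
  have hint : ∀ lam : ℝ, IntervalIntegrable (fun t => Real.exp (lam * t)) volume lb la :=
    fun lam => (Real.continuous_exp.comp (continuous_const.mul continuous_id)).intervalIntegrable _ _
  refine ⟨convex_univ, fun p _ q _ w v hw hv hwv => ?_⟩
  simp only [smul_eq_mul]
  calc ∫ t in lb..la, Real.exp ((w * p + v * q) * t)
      ≤ ∫ t in lb..la, (w * Real.exp (p * t) + v * Real.exp (q * t)) := by
        apply intervalIntegral.integral_mono_on h (hint _)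
          (((hint p).const_mul w).add ((hint q).const_mul v))
        intro t _
        have := convexOn_exp.2 (Set.mem_univ (p * t)) (Set.mem_univ (q * t)) hw hv hwv
        simpa [smul_eq_mul, mul_add, add_mul, mul_comm, mul_assoc, mul_left_comm] using this
    _ = (w * ∫ t in lb..la, Real.exp (p * t)) + v * ∫ t in lb..la, Real.exp (q * t) := by
        rw [intervalIntegral.integral_add ((hint p).const_mul w) ((hint q).const_mul v),
          intervalIntegral.integral_const_mul, intervalIntegral.integral_const_mul]

lemma int_exp_mul (c lb la : ℝ) (hc : c ≠ 0) :
    ∫ t in lb..la, Real.exp (c * t) = (Real.exp (c * la) - Real.exp (c * lb)) / c := by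
  have : ∀ t ∈ Set.uIcc lb la, HasDerivAt (fun s => Real.exp (c * s) / c) (Real.exp (c * t)) t := by
    intro t _
    have h1 : HasDerivAt (fun s => Real.exp (c * s)) (Real.exp (c * t) * c) t := by
      have := (Real.hasDerivAt_exp (c * t)).comp t ((hasDerivAt_id t).const_mul c)
      rw [mul_one] at this
      exact this
    simpa [mul_div_assoc, mul_div_cancel_right₀ _ hc] using h1.div_const c
  rw [intervalIntegral.integral_eq_sub_of_hasDerivAt this
    ((Real.continuous_exp.comp (continuous_const.mul continuous_id)).intervalIntegrable _ _)]
  ring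


/-- For each fixed `x ∈ [0,1)`, `λ ↦ Q̃(x,λ)` is convex on `ℝ`. -/
theorem tukeyQabs_convexOn (x : ℝ) (hx0 : 0 ≤ x) (hx1 : x < 1) :
    ConvexOn ℝ Set.univ (fun lam : ℝ => tukeyQabs x lam) := by
  have ha : (0:ℝ) < (1 + x) / 2 := by linarith
  have hb : (0:ℝ) < (1 - x) / 2 := by linarith
  have hle : Real.log ((1 - x) / 2) ≤ Real.log ((1 + x) / 2) :=
    Real.log_le_log hb (by linarith)
  have heq : (fun lam : ℝ => tukeyQabs x lam)
      = fun lam : ℝ => ∫ t in Real.log ((1 - x) / 2)..Real.log ((1 + x) / 2), Real.exp (lam * t) := by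
    funext lam
    by_cases hl : lam = 0
    · rw [tukeyQabs, if_pos hl, hl]
      rw [show (fun t : ℝ => Real.exp ((0:ℝ) * t)) = fun _ => (1:ℝ) by funext t; simp]
      rw [intervalIntegral.integral_const, smul_eq_mul, mul_one,
        ← Real.log_div (ne_of_gt ha) (ne_of_gt hb)]
      congr 1
      field_simp
    · rw [tukeyQabs, if_neg hl, int_exp_mul lam _ _ hl]
      rw [Real.rpow_def_of_pos ha, Real.rpow_def_of_pos hb]
      ring_nf
  rw [heq]
  exact convex_int _ _ hle
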